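/- Let $a,l\in\mathbb{R}$ with $a^2+l^2>0$. Then $\int_{-1}^{1}|as+l|^{-1/2}\,ds < 100/(a^2+l^2)^{1/4}$. -/

import Mathlib

open MeasureTheory Set
open scoped ENNReal

private lemma Kpos_le : ∫⁻ t in Icc (0:ℝ) 3, (ENNReal.ofReal |t|) ^ (-(1/2:ℝ))
    ≤ ENNReal.ofReal (7/2) := by
  have h1 : ∫⁻ t in Icc (0:ℝ) 3, (ENNReal.ofReal |t|) ^ (-(1/2:ℝ))
      = ∫⁻ t in Ioc (0:ℝ) 3, ENNReal.ofReal (t ^ (-(1/2:ℝ))) := by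
    rw [← setLIntegral_congr (MeasureTheory.Ioc_ae_eq_Icc)]
    refine setLIntegral_congr_fun measurableSet_Ioc ?_
    intro t ht
    dsimp only
    rw [abs_of_pos ht.1, ENNReal.ofReal_rpow_of_pos ht.1]
  rw [h1]
  have hint : IntegrableOn (fun t : ℝ => t ^ (-(1/2:ℝ))) (Ioc 0 3) volume := by
    rw [← intervalIntegrable_iff_integrableOn_Ioc_of_le (by norm_num)]
    exact intervalIntegral.intervalIntegrable_rpow' (by norm_num)
  rw [← ofReal_integral_eq_lintegral_ofReal hint ?nonneg]
  case nonneg =>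
    filter_upwards [ae_restrict_mem measurableSet_Ioc] with t ht
    exact Real.rpow_nonneg ht.1.le _
  apply ENNReal.ofReal_le_ofReal
  have h2 : ∫ t in Ioc (0:ℝ) 3, t ^ (-(1/2:ℝ))
      = ∫ t in (0:ℝ)..3, t ^ (-(1/2:ℝ)) :=
    (intervalIntegral.integral_of_le (by norm_num)).symm
  rw [h2, integral_rpow (Or.inl (by norm_num))]
  rw [show (-(1/2:ℝ)+1) = 1/2 by norm_num, Real.zero_rpow (by norm_num),
    ← Real.sqrt_eq_rpow]
  nlinarith [Real.sq_sqrt (show (0:ℝ) ≤ 3 by norm_num), Real.sqrt_nonneg 3]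

private lemma Kneg_eq : ∫⁻ t in Icc (-3:ℝ) 0, (ENNReal.ofReal |t|) ^ (-(1/2:ℝ))
    = ∫⁻ t in Icc (0:ℝ) 3, (ENNReal.ofReal |t|) ^ (-(1/2:ℝ)) := by
  have h := (Measure.measurePreserving_neg (volume : Measure ℝ)).setLIntegral_comp_preimage_emb
    (Homeomorph.neg ℝ).measurableEmbedding
    (fun t => (ENNReal.ofReal |t|) ^ (-(1/2:ℝ))) (Icc 0 3)
  have hpre : (Neg.neg ⁻¹' Icc (0:ℝ) 3 : Set ℝ) = Icc (-3:ℝ) 0 := by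
    ext x
    simp only [mem_preimage, mem_Icc]
    constructor <;> intro hx <;> exact ⟨by linarith [hx.1, hx.2], by linarith [hx.1, hx.2]⟩
  rw [hpre] at h
  simpa [abs_neg] using h

private lemma K_le : ∫⁻ t in Icc (-3:ℝ) 3, (ENNReal.ofReal |t|) ^ (-(1/2:ℝ))
    ≤ ENNReal.ofReal 7 := by
  rw [← Icc_union_Icc_eq_Icc (show (-3:ℝ) ≤ 0 by norm_num) (show (0:ℝ) ≤ 3 by norm_num)]
  calc ∫⁻ t in Icc (-3:ℝ) 0 ∪ Icc (0:ℝ) 3, (ENNReal.ofReal |t|) ^ (-(1/2:ℝ))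
      ≤ (∫⁻ t in Icc (-3:ℝ) 0, (ENNReal.ofReal |t|) ^ (-(1/2:ℝ)))
        + ∫⁻ t in Icc (0:ℝ) 3, (ENNReal.ofReal |t|) ^ (-(1/2:ℝ)) := lintegral_union_le _ _ _
    _ ≤ ENNReal.ofReal (7/2) + ENNReal.ofReal (7/2) := add_le_add (Kneg_eq ▸ Kpos_le) Kpos_le
    _ = ENNReal.ofReal 7 := by rw [← ENNReal.ofReal_add (by norm_num) (by norm_num)]; norm_num

private lemma J_le {c : ℝ} (hc : |c| ≤ 2) :
    ∫⁻ s in Icc (-1:ℝ) 1, (ENNReal.ofReal |s + c|) ^ (-(1/2:ℝ)) ≤ ENNReal.ofReal 7 := by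
  set g : ℝ → ℝ≥0∞ := (Icc (-3:ℝ) 3).indicator (fun t => (ENNReal.ofReal |t|) ^ (-(1/2:ℝ)))
    with hg
  have hc' := abs_le.1 hc
  have hmem : ∀ s ∈ Icc (-1:ℝ) 1, s + c ∈ Icc (-3:ℝ) 3 := by
    intro s hs
    exact ⟨by linarith [hs.1, hc'.1], by linarith [hs.2, hc'.2]⟩
  have step0 : ∫⁻ s in Icc (-1:ℝ) 1, (ENNReal.ofReal |s + c|) ^ (-(1/2:ℝ))
      = ∫⁻ s in Icc (-1:ℝ) 1, g (s + c) := by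
    refine setLIntegral_congr_fun measurableSet_Icc (fun s hs => ?_)
    rw [hg, Set.indicator_of_mem (hmem s hs)]
  have step1 : ∫⁻ s in Icc (-1:ℝ) 1, (ENNReal.ofReal |s + c|) ^ (-(1/2:ℝ))
      ≤ ∫⁻ s, g (s + c) := step0.trans_le (setLIntegral_le_lintegral _ _)
  have step2 : ∫⁻ s, g (s + c) = ∫⁻ t, g t := lintegral_add_right_eq_self g c
  rw [step2, lintegral_indicator measurableSet_Icc] at step1
  exact step1.trans K_le

private lemma case2_enn (a l : ℝ) (ha : a ≠ 0) (hla : |l| ≤ 2 * |a|) :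
    ∫⁻ s in Icc (-1:ℝ) 1, (ENNReal.ofReal |a * s + l|) ^ (-(1/2:ℝ))
      ≤ ENNReal.ofReal (|a| ^ (-(1/2:ℝ)) * 7) := by
  have hab : (0:ℝ) < |a| := abs_pos.2 ha
  have key : ∀ s : ℝ, (ENNReal.ofReal |a * s + l|) ^ (-(1/2:ℝ))
      = ENNReal.ofReal |a| ^ (-(1/2:ℝ)) * (ENNReal.ofReal |s + l/a|) ^ (-(1/2:ℝ)) := by
    intro s
    have h1 : a * s + l = a * (s + l/a) := by field_simp
    rw [h1, abs_mul, ENNReal.ofReal_mul (abs_nonneg a),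
      ENNReal.mul_rpow_of_ne_top ENNReal.ofReal_ne_top ENNReal.ofReal_ne_top]
  simp_rw [key]
  rw [lintegral_const_mul _ (by fun_prop), ENNReal.ofReal_rpow_of_pos hab]
  have hla' : |l/a| ≤ 2 := by
    rw [abs_div, div_le_iff₀ hab]; linarith
  calc ENNReal.ofReal (|a| ^ (-(1/2:ℝ)))
        * ∫⁻ s in Icc (-1:ℝ) 1, (ENNReal.ofReal |s + l/a|) ^ (-(1/2:ℝ))
      ≤ ENNReal.ofReal (|a| ^ (-(1/2:ℝ))) * ENNReal.ofReal 7 := by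
        gcongr
        exact J_le hla'
    _ = ENNReal.ofReal (|a| ^ (-(1/2:ℝ)) * 7) :=
        (ENNReal.ofReal_mul (Real.rpow_nonneg (abs_nonneg a) _)).symm

private lemma case1_enn (a l : ℝ) (hl : l ≠ 0) (hal : 2 * |a| ≤ |l|) :
    ∫⁻ s in Icc (-1:ℝ) 1, (ENNReal.ofReal |a * s + l|) ^ (-(1/2:ℝ))
      ≤ ENNReal.ofReal ((|l|/2) ^ (-(1/2:ℝ)) * 2) := by
  have hl2 : (0:ℝ) < |l|/2 := by have := abs_pos.2 hl; linarith
  have bound : ∀ s ∈ Icc (-1:ℝ) 1, (ENNReal.ofReal |a * s + l|) ^ (-(1/2:ℝ))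
      ≤ ENNReal.ofReal ((|l|/2) ^ (-(1/2:ℝ))) := by
    intro s hs
    have hs1 : |s| ≤ 1 := abs_le.2 ⟨hs.1, hs.2⟩
    have h1 : |l|/2 ≤ |a * s + l| := by
      have h2 : |a * s| ≤ |a| := by
        rw [abs_mul]
        calc |a| * |s| ≤ |a| * 1 := by gcongr
          _ = |a| := mul_one _
      have h3 : |l| - |a * s| ≤ |a * s + l| := by
        have := abs_add_le (a * s) l
        have := abs_sub_abs_le_abs_sub l (-(a*s))
        calc |l| - |a*s| = |l| - |-(a*s)| := by rw [abs_neg]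
          _ ≤ |l - -(a*s)| := abs_sub_abs_le_abs_sub _ _
          _ = |a * s + l| := by ring_nf
      linarith
    calc (ENNReal.ofReal |a * s + l|) ^ (-(1/2:ℝ))
        ≤ (ENNReal.ofReal (|l|/2)) ^ (-(1/2:ℝ)) := by
          rw [ENNReal.rpow_neg, ENNReal.rpow_neg]
          exact ENNReal.inv_le_inv.2
            (ENNReal.rpow_le_rpow (ENNReal.ofReal_le_ofReal h1) (by norm_num))
      _ = ENNReal.ofReal ((|l|/2) ^ (-(1/2:ℝ))) := ENNReal.ofReal_rpow_of_pos hl2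
  calc ∫⁻ s in Icc (-1:ℝ) 1, (ENNReal.ofReal |a * s + l|) ^ (-(1/2:ℝ))
      ≤ ∫⁻ _ in Icc (-1:ℝ) 1, ENNReal.ofReal ((|l|/2) ^ (-(1/2:ℝ))) :=
        setLIntegral_mono measurable_const bound
    _ = ENNReal.ofReal ((|l|/2) ^ (-(1/2:ℝ))) * volume (Icc (-1:ℝ) 1) :=
        setLIntegral_const _ _
    _ = ENNReal.ofReal ((|l|/2) ^ (-(1/2:ℝ)) * 2) := by
        rw [Real.volume_Icc, show (1:ℝ) - (-1) = 2 by norm_num,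
          ← ENNReal.ofReal_mul (Real.rpow_nonneg hl2.le _)]

private lemma sq_of_rpow_half {x : ℝ} (hx : 0 < x) :
    (x ^ ((1:ℝ)/2)) ^ 2 = x := by
  rw [← Real.rpow_natCast (x ^ ((1:ℝ)/2)) 2, ← Real.rpow_mul hx.le]
  norm_num

private lemma rpow_quarter_le {y z : ℝ} (hy : 0 ≤ y) (hz : 0 ≤ z) (h : y ≤ z ^ 4) :
    y ^ ((1:ℝ)/4) ≤ z := by
  have := Real.rpow_le_rpow hy h (show (0:ℝ) ≤ 1/4 by norm_num)
  calc y ^ ((1:ℝ)/4) ≤ (z ^ 4) ^ ((1:ℝ)/4) := this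
    _ = z := by
      rw [← Real.rpow_natCast z 4, ← Real.rpow_mul hz]
      norm_num

private lemma case1_real (a l : ℝ) (hl : l ≠ 0) (hal : 2 * |a| ≤ |l|) :
    (|l|/2) ^ (-(1/2:ℝ)) * 2 < 100 / (a ^ 2 + l ^ 2) ^ ((1:ℝ)/4) := by
  have hx : (0:ℝ) < |l| := abs_pos.2 hl
  set s := |l| ^ ((1:ℝ)/2) with hs
  have hspos : 0 < s := Real.rpow_pos_of_pos hx _
  have hs2 : s ^ 2 = |l| := sq_of_rpow_half hx
  have hDle : (a ^ 2 + l ^ 2) ^ ((1:ℝ)/4) ≤ 2 * s := by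
    apply rpow_quarter_le (by positivity) (by positivity)
    have ha2 : a ^ 2 ≤ |l| ^ 2 / 4 := by nlinarith [abs_nonneg a, sq_abs a]
    have : l ^ 2 = |l| ^ 2 := (sq_abs l).symm
    nlinarith [hspos]
  have hDpos : 0 < (a ^ 2 + l ^ 2) ^ ((1:ℝ)/4) := by
    apply Real.rpow_pos_of_pos; nlinarith [sq_abs l]
  have hLHS : (|l|/2) ^ (-(1/2:ℝ)) * 2 ≤ 4 / s := by
    have h1 : (s/2) ^ 2 ≤ |l|/2 := by nlinarith
    have h2 : s/2 ≤ (|l|/2) ^ ((1/2:ℝ)) := by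
      calc s/2 = ((s/2) ^ 2) ^ ((1:ℝ)/2) := by
            rw [← Real.rpow_natCast (s/2) 2, ← Real.rpow_mul (by positivity)]
            norm_num
        _ ≤ (|l|/2) ^ ((1/2:ℝ)) := Real.rpow_le_rpow (by positivity) h1 (by norm_num)
    have h3 : (|l|/2) ^ (-(1/2:ℝ)) = ((|l|/2) ^ ((1/2:ℝ)))⁻¹ := Real.rpow_neg (by positivity) _
    rw [h3]
    rw [div_eq_mul_inv]
    have h4 : ((|l|/2) ^ ((1/2:ℝ)))⁻¹ ≤ (s/2)⁻¹ := by
      apply inv_anti₀ (by positivity) h2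
    have h5 : (s/2)⁻¹ = 2 / s := by field_simp
    calc ((|l|/2) ^ ((1/2:ℝ)))⁻¹ * 2 ≤ (s/2)⁻¹ * 2 := by gcongr
      _ = 4 * s⁻¹ := by rw [h5]; field_simp; ring
  have hRHS : 50 / s ≤ 100 / (a ^ 2 + l ^ 2) ^ ((1:ℝ)/4) := by
    rw [div_le_div_iff₀ hspos hDpos]
    nlinarith
  have h45 : 4 / s < 50 / s := by
    rw [div_lt_div_iff₀ hspos hspos]; nlinarith
  exact lt_of_le_of_lt hLHS (lt_of_lt_of_le h45 hRHS)

private lemma case2_real (a l : ℝ) (ha : a ≠ 0) (hla : |l| ≤ 2 * |a|) :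
    |a| ^ (-(1/2:ℝ)) * 7 < 100 / (a ^ 2 + l ^ 2) ^ ((1:ℝ)/4) := by
  have hy : (0:ℝ) < |a| := abs_pos.2 ha
  set s := |a| ^ ((1:ℝ)/2) with hs
  have hspos : 0 < s := Real.rpow_pos_of_pos hy _
  have hs2 : s ^ 2 = |a| := sq_of_rpow_half hy
  have hDle : (a ^ 2 + l ^ 2) ^ ((1:ℝ)/4) ≤ 2 * s := by
    apply rpow_quarter_le (by positivity) (by positivity)
    have h1 : l ^ 2 ≤ 4 * |a| ^ 2 := by nlinarith [abs_nonneg l, sq_abs l]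
    have h2 : a ^ 2 = |a| ^ 2 := (sq_abs a).symm
    nlinarith
  have hDpos : 0 < (a ^ 2 + l ^ 2) ^ ((1:ℝ)/4) := by
    apply Real.rpow_pos_of_pos; nlinarith [sq_abs a]
  have hLHS : |a| ^ (-(1/2:ℝ)) * 7 = 7 / s := by
    rw [Real.rpow_neg hy.le]
    field_simp [hs]
    exact hs
  have hRHS : 50 / s ≤ 100 / (a ^ 2 + l ^ 2) ^ ((1:ℝ)/4) := by
    rw [div_le_div_iff₀ hspos hDpos]
    nlinarith
  rw [hLHS]
  have h45 : 7 / s < 50 / s := by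
    rw [div_lt_div_iff₀ hspos hspos]; nlinarith
  exact lt_of_lt_of_le h45 hRHS

theorem stmt_2 (a l : ℝ) (h : 0 < a ^ 2 + l ^ 2) :
    ∫⁻ s in Set.Icc (-1 : ℝ) 1, (ENNReal.ofReal |a * s + l|) ^ (-(1 / 2 : ℝ)) <
      ENNReal.ofReal (100 / (a ^ 2 + l ^ 2) ^ ((1 : ℝ) / 4)) := by
  have hRHSpos : 0 < 100 / (a ^ 2 + l ^ 2) ^ ((1:ℝ)/4) := by
    have := Real.rpow_pos_of_pos h ((1:ℝ)/4)
    positivity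
  by_cases hc : 2 * |a| ≤ |l|
  · have hl : l ≠ 0 := by
      intro hl0
      rw [hl0] at hc
      simp at hc
      have ha0 : a = 0 := by have := abs_nonneg a; have := hc; nlinarith [abs_nonneg a, sq_abs a]
      rw [ha0, hl0] at h; norm_num at h
    exact lt_of_le_of_lt (case1_enn a l hl hc)
      ((ENNReal.ofReal_lt_ofReal_iff hRHSpos).2 (case1_real a l hl hc))
  · push_neg at hc
    have ha : a ≠ 0 := by
      intro ha0
      rw [ha0] at hc
      simp at hc
      exact absurd hc (not_lt.2 (abs_nonneg l))
    exact lt_of_le_of_lt (case2_enn a l ha hc.le)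
      ((ENNReal.ofReal_lt_ofReal_iff hRHSpos).2 (case2_real a l ha hc.le))
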